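/- Graph halving lemma: Let G and D be finite connected unit-conductance graphs such that G is 'star-type': its edge set is partitioned into edges (x, y) from a set of centers x to midpoints y, where each edge (x,y) of G corresponds to exactly two edges (x, y₊), (x, y₋) of D (same centers x, and D's vertex set consists of the centers together with the endpoint pairs {y₊, y₋}). Suppose boundary sets A^G, B^G of G consist of midpoints y and the corresponding boundary sets A^D, B^D of D consist of the corresponding endpoints y₊, y₋. Then the effective resistances satisfy R_G(A^G, B^G) = 2·R_D(A^D, B^D). -/
import Mathlib


open Sum

/-- Energy on the star-type graph `G` with centers `X` and midpoint vertices `Y`: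
each edge `(x,y)` with `e x y = true` contributes `(u x - u y)²` (unit conductances). -/
def starEnergyG {X Y : Type*} [Fintype X] [Fintype Y] (e : X → Y → Bool)
    (u : X ⊕ Y → ℝ) : ℝ :=
  ∑ x : X, ∑ y : Y, if e x y then (u (inl x) - u (inr y)) ^ 2 else 0

/-- Energy on the doubled graph `D`, where each midpoint `y` is replaced by the pair of
endpoints `(y, b)`, `b : Bool`, each joined to the same centers. -/
def starEnergyD {X Y : Type*} [Fintype X] [Fintype Y] (e : X → Y → Bool)
    (u : X ⊕ (Y × Bool) → ℝ) : ℝ :=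
  ∑ x : X, ∑ y : Y, ∑ b : Bool, if e x y then (u (inl x) - u (inr (y, b))) ^ 2 else 0

/-- Adjacency on the vertex set of the star graph `G`. -/
def starAdj {X Y : Type*} (e : X → Y → Bool) (p q : X ⊕ Y) : Prop :=
  ∃ x y, e x y ∧ ((p = inl x ∧ q = inr y) ∨ (p = inr y ∧ q = inl x))

lemma starEnergyG_nonneg {X Y : Type*} [Fintype X] [Fintype Y] (e : X → Y → Bool)
    (u : X ⊕ Y → ℝ) : 0 ≤ starEnergyG e u := by
  refine Finset.sum_nonneg fun x _ => Finset.sum_nonneg fun y _ => ?_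
  split_ifs <;> positivity

lemma starEnergyD_nonneg {X Y : Type*} [Fintype X] [Fintype Y] (e : X → Y → Bool)
    (u : X ⊕ (Y × Bool) → ℝ) : 0 ≤ starEnergyD e u := by
  refine Finset.sum_nonneg fun x _ => Finset.sum_nonneg fun y _ =>
    Finset.sum_nonneg fun b _ => ?_
  split_ifs <;> positivity

lemma starEnergyD_lift {X Y : Type*} [Fintype X] [Fintype Y] (e : X → Y → Bool)
    (u : X ⊕ Y → ℝ) :
    starEnergyD e (Sum.elim (fun x => u (inl x)) (fun p => u (inr p.1)))
      = 2 * starEnergyG e u := by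
  unfold starEnergyD starEnergyG
  rw [Finset.mul_sum]
  refine Finset.sum_congr rfl fun x _ => ?_
  rw [Finset.mul_sum]
  refine Finset.sum_congr rfl fun y _ => ?_
  simp only [Fintype.sum_bool, Sum.elim_inl, Sum.elim_inr]
  split_ifs <;> ring

lemma starEnergyG_avg {X Y : Type*} [Fintype X] [Fintype Y] (e : X → Y → Bool)
    (u : X ⊕ (Y × Bool) → ℝ) :
    starEnergyG e (Sum.elim (fun x => u (inl x))
        (fun y => (u (inr (y, true)) + u (inr (y, false))) / 2))
      ≤ starEnergyD e u / 2 := by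
  unfold starEnergyD starEnergyG
  rw [Finset.sum_div]
  refine Finset.sum_le_sum fun x _ => ?_
  rw [Finset.sum_div]
  refine Finset.sum_le_sum fun y _ => ?_
  simp only [Fintype.sum_bool, Sum.elim_inl, Sum.elim_inr]
  split_ifs with h
  · nlinarith [sq_nonneg (u (inr (y, true)) - u (inr (y, false)))]
  · simp

/-- graph halving lemma: for a connected star-type graph `G` with boundary
midpoint sets `A, B` (disjoint, nonempty) and the doubled graph `D` with the corresponding
endpoint boundary sets, the effective resistances satisfy `R_G = 2·R_D`, where
`R⁻¹ = inf` of the respective Dirichlet energies over feasible potentials. -/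
theorem star_graph_halving {X Y : Type*} [Fintype X] [Fintype Y] (e : X → Y → Bool)
    (hconn : ∀ p q : X ⊕ Y, Relation.ReflTransGen (starAdj e) p q)
    (A B : Finset Y) (hAB : Disjoint A B) (hA : A.Nonempty) (hB : B.Nonempty) :
    (sInf {E : ℝ | ∃ u : X ⊕ Y → ℝ,
        (∀ y ∈ A, u (inr y) = 0) ∧ (∀ y ∈ B, u (inr y) = 1) ∧ E = starEnergyG e u})⁻¹
      = 2 * (sInf {E : ℝ | ∃ u : X ⊕ (Y × Bool) → ℝ,
        (∀ y ∈ A, ∀ b : Bool, u (inr (y, b)) = 0) ∧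
        (∀ y ∈ B, ∀ b : Bool, u (inr (y, b)) = 1) ∧ E = starEnergyD e u})⁻¹ := by
  classical
  set SG : Set ℝ := {E : ℝ | ∃ u : X ⊕ Y → ℝ,
      (∀ y ∈ A, u (inr y) = 0) ∧ (∀ y ∈ B, u (inr y) = 1) ∧ E = starEnergyG e u} with hSG
  set SD : Set ℝ := {E : ℝ | ∃ u : X ⊕ (Y × Bool) → ℝ,
      (∀ y ∈ A, ∀ b : Bool, u (inr (y, b)) = 0) ∧
      (∀ y ∈ B, ∀ b : Bool, u (inr (y, b)) = 1) ∧ E = starEnergyD e u} with hSD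
  -- a feasible potential for G
  set u0 : X ⊕ Y → ℝ := Sum.elim (fun _ => 0) (fun y => if y ∈ B then 1 else 0) with hu0
  have hu0A : ∀ y ∈ A, u0 (inr y) = 0 := by
    intro y hy
    have : y ∉ B := fun hyB => (Finset.disjoint_left.mp hAB hy) hyB
    simp [hu0, this]
  have hu0B : ∀ y ∈ B, u0 (inr y) = 1 := by intro y hy; simp [hu0, hy]
  have hSGne : SG.Nonempty := ⟨starEnergyG e u0, u0, hu0A, hu0B, rfl⟩
  have hSGbdd : BddBelow SG := by
    refine ⟨0, fun E hE => ?_⟩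
    obtain ⟨u, _, _, rfl⟩ := hE
    exact starEnergyG_nonneg e u
  have hSDbdd : BddBelow SD := by
    refine ⟨0, fun E hE => ?_⟩
    obtain ⟨u, _, _, rfl⟩ := hE
    exact starEnergyD_nonneg e u
  have hSDne : SD.Nonempty := by
    refine ⟨starEnergyD e (Sum.elim (fun x => u0 (inl x)) (fun p => u0 (inr p.1))),
      Sum.elim (fun x => u0 (inl x)) (fun p => u0 (inr p.1)), ?_, ?_, rfl⟩
    · intro y hy b; simpa using hu0A y hy
    · intro y hy b; simpa using hu0B y hy
  have key : sInf SD = 2 * sInf SG := by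
    apply le_antisymm
    · have h : sInf SD / 2 ≤ sInf SG := by
        refine le_csInf hSGne fun g hg => ?_
        obtain ⟨u, huA, huB, rfl⟩ := hg
        have hmem : 2 * starEnergyG e u ∈ SD := by
          refine ⟨Sum.elim (fun x => u (inl x)) (fun p => u (inr p.1)), ?_, ?_,
            (starEnergyD_lift e u).symm⟩
          · intro y hy b; simpa using huA y hy
          · intro y hy b; simpa using huB y hy
        have := csInf_le hSDbdd hmem
        linarith
      linarith
    · refine le_csInf hSDne fun d hd => ?_
      obtain ⟨u, huA, huB, rfl⟩ := hd
      have hmem : starEnergyG e (Sum.elim (fun x => u (inl x))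
          (fun y => (u (inr (y, true)) + u (inr (y, false))) / 2)) ∈ SG := by
        refine ⟨_, ?_, ?_, rfl⟩
        · intro y hy; simp [huA y hy]
        · intro y hy; simp [huB y hy]
      have h1 := csInf_le hSGbdd hmem
      have h2 := starEnergyG_avg e u
      linarith
  rw [key, mul_inv]
  ring
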